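/- For 0 < i < n and 0 ≤ s ≤ n, the intersection of the face σ(s) = Δ^{I(s)} with the subcomplex Ω(Δ^1 × Λ^n_i ∪ ∂Δ^1 × Δ^n) ∪ ⋃_{s < r ≤ n} σ(r) of Ω^n equals the generalized horn Λ^{I(s)}_{M(s)}, where I(s) = {00,...,0s,1s,...,1n} and M(s) = {1i} if s = 0, M(s) = {0s,1i} if 0 < s < i, M(s) = {0i} if s = i, and M(s) = {0i,0s} if i < s ≤ n. -/
import Mathlib


/-- Vertices of `Δ^{[n]⋆[n]^op}` are identified with `Fin (2n+2)` via `0i ↦ i`,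
`1i ↦ 2n+1-i`.  `sigmaV n r` is the vertex set of `σ(r) = Δ^{{00,…,0r,1r,…,1n}}`. -/
def sigmaV (n r : ℕ) : Finset (Fin (2 * n + 2)) :=
  Finset.univ.filter fun v =>
    (v : ℕ) ≤ r ∨ (n + 1 ≤ (v : ℕ) ∧ (v : ℕ) ≤ 2 * n + 1 - r)

/-- The second coordinate of a vertex: `0r ↦ r` and `1r ↦ r`. -/
def coordV (n : ℕ) (v : Fin (2 * n + 2)) : ℕ :=
  if (v : ℕ) ≤ n then (v : ℕ) else 2 * n + 1 - (v : ℕ)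

/-- A subset `S` spans a simplex of the subcomplex `Ω(Δ^1 × Λ^n_i ∪ ∂Δ^1 × Δ^n)` iff
either `S` lies in some `σ(r)` and its second coordinates omit some vertex `k ≠ i` of
`[n]` (the `Δ^1 × Λ^n_i` part), or all vertices of `S` lie in the `0`-row or all in the
`1`-row (the `∂Δ^1 × Δ^n` part). -/
def memOmegaHornBd (n i : ℕ) (S : Finset (Fin (2 * n + 2))) : Prop :=
  ((∃ r ≤ n, S ⊆ sigmaV n r) ∧ ∃ k ≤ n, k ≠ i ∧ ∀ v ∈ S, coordV n v ≠ k) ∨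
    (∀ v ∈ S, (v : ℕ) ≤ n) ∨ (∀ v ∈ S, n + 1 ≤ (v : ℕ))

/-- The vertex set `M(s)`: `{1i}` if `s = 0`; `{0s,1i}` if `0 < s < i`; `{0i}` if `s = i`;
`{0i,0s}` if `i < s ≤ n`. -/
def MS (n i s : ℕ) : Finset (Fin (2 * n + 2)) :=
  if s = 0 then Finset.univ.filter fun v => (v : ℕ) = 2 * n + 1 - i
  else if s < i then Finset.univ.filter fun v => (v : ℕ) = s ∨ (v : ℕ) = 2 * n + 1 - i
  else if s = i then Finset.univ.filter fun v => (v : ℕ) = i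
  else Finset.univ.filter fun v => (v : ℕ) = i ∨ (v : ℕ) = s

/-- A nonempty subset `S` spans a simplex of `Λ^I_J` iff `S ⊆ I` and `S` omits some
`m ∈ I - J`. -/
def hornMem {α : Type*} [DecidableEq α] (I J S : Finset α) : Prop :=
  S ⊆ I ∧ ∃ m ∈ I \ J, m ∉ S


lemma mem_sigmaV {n r : ℕ} {v : Fin (2 * n + 2)} :
    v ∈ sigmaV n r ↔ ((v : ℕ) ≤ r ∨ (n + 1 ≤ (v : ℕ) ∧ (v : ℕ) ≤ 2 * n + 1 - r)) := by
  simp [sigmaV]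

lemma mem_MS {n i s : ℕ} {v : Fin (2 * n + 2)} :
    v ∈ MS n i s ↔ (if s = 0 then (v : ℕ) = 2 * n + 1 - i
      else if s < i then (v : ℕ) = s ∨ (v : ℕ) = 2 * n + 1 - i
      else if s = i then (v : ℕ) = i
      else (v : ℕ) = i ∨ (v : ℕ) = s) := by
  unfold MS; split_ifs <;> simp


/-- For `0 < i < n` and `0 ≤ s ≤ n`, the intersection of the face `σ(s) = Δ^{I(s)}` with
the subcomplex `Ω(Δ^1 × Λ^n_i ∪ ∂Δ^1 × Δ^n) ∪ ⋃_{s < r ≤ n} σ(r)` equals the generalized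
horn `Λ^{I(s)}_{M(s)}` (as families of vertex sets of simplices). -/
theorem sigma_inter_X (n i s : ℕ) (h0 : 0 < i) (hi : i < n) (hs : s ≤ n)
    (S : Finset (Fin (2 * n + 2))) (hS : S.Nonempty) :
    (S ⊆ sigmaV n s ∧
        (memOmegaHornBd n i S ∨ ∃ r, s < r ∧ r ≤ n ∧ S ⊆ sigmaV n r)) ↔
      hornMem (sigmaV n s) (MS n i s) S := by
  constructor
  · rintro ⟨hSs, hX⟩
    refine ⟨hSs, ?_⟩
    rcases hX with (⟨⟨r, hrn, hSr⟩, k, hk, hki, hkS⟩ | hall0 | hall1) | ⟨r, hsr, hrn, hSr⟩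
    · -- case B3: Λⁿᵢ part
      by_cases hks : s ≤ k
      · refine ⟨⟨2 * n + 1 - k, by omega⟩, ?_, ?_⟩
        · rw [Finset.mem_sdiff, mem_sigmaV, mem_MS]
          refine ⟨Or.inr ⟨by simp only [Fin.val_mk]; omega, by simp only [Fin.val_mk]; omega⟩, ?_⟩
          split_ifs <;> simp <;> omega
        · intro hm
          have h := hkS _ hm
          simp only [coordV, Fin.val_mk] at h
          split_ifs at h <;> omega
      · refine ⟨⟨k, by omega⟩, ?_, ?_⟩
        · rw [Finset.mem_sdiff, mem_sigmaV, mem_MS]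
          refine ⟨Or.inl (by simp only [Fin.val_mk]; omega), ?_⟩
          split_ifs <;> simp <;> omega
        · intro hm
          have h := hkS _ hm
          simp only [coordV, Fin.val_mk] at h
          split_ifs at h <;> omega
    · -- case B1: all in 0-row; witness 1s
      refine ⟨⟨2 * n + 1 - s, by omega⟩, ?_, ?_⟩
      · rw [Finset.mem_sdiff, mem_sigmaV, mem_MS]
        refine ⟨Or.inr ⟨by simp only [Fin.val_mk]; omega, by simp only [Fin.val_mk]; omega⟩, ?_⟩
        split_ifs <;> simp <;> omega
      · intro hm
        have := hall0 _ hm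
        simp only [Fin.val_mk] at this
        omega
    · -- case B2: all in 1-row; witness 00
      refine ⟨⟨0, by omega⟩, ?_, ?_⟩
      · rw [Finset.mem_sdiff, mem_sigmaV, mem_MS]
        refine ⟨Or.inl (by simp), ?_⟩
        split_ifs <;> simp <;> omega
      · intro hm
        have := hall1 _ hm
        simp only [Fin.val_mk] at this
        omega
    · -- case A: S ⊆ σ(r), r > s; witness 1s
      refine ⟨⟨2 * n + 1 - s, by omega⟩, ?_, ?_⟩
      · rw [Finset.mem_sdiff, mem_sigmaV, mem_MS]
        refine ⟨Or.inr ⟨by simp only [Fin.val_mk]; omega, by simp only [Fin.val_mk]; omega⟩, ?_⟩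
        split_ifs <;> simp <;> omega
      · intro hm
        have := mem_sigmaV.1 (hSr hm)
        simp only [Fin.val_mk] at this
        omega
  · rintro ⟨hSs, m, hm, hmS⟩
    rw [Finset.mem_sdiff, mem_sigmaV, mem_MS] at hm
    obtain ⟨hmσ, hmM⟩ := hm
    have hmlt := m.isLt
    refine ⟨hSs, ?_⟩
    rcases hmσ with hlo | ⟨hhi1, hhi2⟩
    · -- m = 0k with k = m.val ≤ s
      have hmi : (m : ℕ) ≠ i := by
        intro h; split_ifs at hmM <;> omega
      rcases lt_or_eq_of_le hlo with hlt | heq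
      · -- k < s : unique vertex with this coordinate
        left; left
        refine ⟨⟨s, hs, hSs⟩, (m : ℕ), by omega, hmi, ?_⟩
        intro v hv
        have hvσ := mem_sigmaV.1 (hSs hv)
        have hvlt := v.isLt
        simp only [coordV]
        split_ifs with h
        · intro hceq
          exact hmS (Fin.val_injective hceq ▸ hv)
        · omega
      · -- m.val = s : forces s = 0, m = 00
        have hs0 : s = 0 := by
          by_contra hne; split_ifs at hmM <;> omega
        left; right; right
        intro v hv
        have hvσ := mem_sigmaV.1 (hSs hv)
        rcases hvσ with h | h
        · exfalso
          exact hmS (Fin.val_injective (by omega : (v : ℕ) = (m : ℕ)) ▸ hv)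
        · exact h.1
    · -- m = 1k with k = 2n+1 - m.val, s ≤ k ≤ n
      rcases lt_or_eq_of_le hhi2 with hlt | heq
      · -- k > s : unique vertex with this coordinate
        have hki : 2 * n + 1 - (m : ℕ) ≠ i := by
          intro h; split_ifs at hmM <;> omega
        left; left
        refine ⟨⟨s, hs, hSs⟩, 2 * n + 1 - (m : ℕ), by omega, hki, ?_⟩
        intro v hv
        have hvσ := mem_sigmaV.1 (hSs hv)
        have hvlt := v.isLt
        simp only [coordV]
        split_ifs with h
        · omega
        · intro hceq
          exact hmS (Fin.val_injective (by omega : (v : ℕ) = (m : ℕ)) ▸ hv)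
      · -- m = 1s
        by_cases hsn : s < n
        · right
          refine ⟨s + 1, lt_add_one s, hsn, ?_⟩
          intro v hv
          rw [mem_sigmaV]
          have hvσ := mem_sigmaV.1 (hSs hv)
          have hvlt := v.isLt
          by_cases hvm : (v : ℕ) = (m : ℕ)
          · exact absurd (Fin.val_injective hvm ▸ hv) hmS
          · omega
        · -- s = n : everything left lies in 0-row
          left; right; left
          intro v hv
          have hvσ := mem_sigmaV.1 (hSs hv)
          have hvlt := v.isLt
          by_cases hvm : (v : ℕ) = (m : ℕ)
          · exact absurd (Fin.val_injective hvm ▸ hv) hmS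
          · omega
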